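/- Let (v̄₁, v̄₂), where v̄_i = (v₀^i, v₁^i, ..., v_k^i) for i = 1,2, be a pair of compatible walks in G_d. If (v̄₁, v̄₂) is not a pair of separating walks in G_d, then for each neighbour v_{k+1}^1 ∈ V_d of v_k^1 there is a neighbour v_{k+1}^2 ∈ V_d of v_k^2 with π_d(v_{k+1}^1, v_k^1) = π_d(v_{k+1}^2, v_k^2), and conversely for each neighbour of v_k^2 there is a corresponding neighbour of v_k^1. -/
import Mathlib


namespace Paper

/-- Nodes of the tree `G_d` are finite sequences of pairs of numbers.
We represent a sequence `(a₁, …, a_i)` as the list `[a_i, …, a₁]`, i.e. in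
reverse order, so that consing corresponds to appending a pair at the end. -/
abbrev Nd : Type := ℕ × ℕ

/-- `b₂⁺`: `1` if `b₂ = 0`, and `b₂` otherwise. -/
def bplus (b : ℕ) : ℕ := if b = 0 then 1 else b

/-- For `j ≥ 1`, the `j`-th smallest element of `{lo, lo+1, lo+2, …} \ {f}`.
This realises the greedy choices `c^j = min({lo,…} \ {f, c¹, …, c^{j-1}})`. -/
def nthAvoid (lo f j : ℕ) : ℕ :=
  if lo + j - 1 < f ∨ f < lo then lo + j - 1 else lo + j

/-- The node set `V_d` of the graph `G_d`, given by the rules (G1)–(G4).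
(Sequences are represented as reversed lists, the head being the last pair
`a_i` of the sequence.) -/
inductive Vd (d : ℕ) : List Nd → Prop
  /-- (G1): the empty sequence is a node. -/
  | nil : Vd d []
  /-- (G2): the sequences `((1,0)), ((2,1)), …, ((d,d−1))` are nodes. -/
  | base (k : ℕ) (h1 : 1 ≤ k) (h2 : k ≤ d) : Vd d [(k, k - 1)]
  /-- (G3): children of a node of odd length `< 2d` with last pair `(b₁, b₂)`:
  for `j = 1, …, d−1` append `(c₁ʲ, c₂ʲ)` where `c₁ʲ` is the `j`-th smallest
  element of `{1,…,d} \ {b₂⁺}` and `c₂ʲ` the `j`-th smallest of `{1,…,d} \ {b₁}`. -/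
  | odd (b₁ b₂ : ℕ) (rest : List Nd)
      (hv : Vd d ((b₁, b₂) :: rest))
      (hodd : Odd ((b₁, b₂) :: rest).length)
      (hlt : ((b₁, b₂) :: rest).length < 2 * d)
      (j : ℕ) (hj1 : 1 ≤ j) (hj2 : j ≤ d - 1) :
      Vd d ((nthAvoid 1 (bplus b₂) j, nthAvoid 1 b₁ j) :: (b₁, b₂) :: rest)
  /-- (G4): children of a node of even positive length `< 2d` with last pair
  `(b₁, b₂)`: for `j = 1, …, d−1` append `(c₁ʲ, c₂ʲ)` where `c₁ʲ` is the `j`-th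
  smallest element of `{1,…,d} \ {b₂}` and `c₂ʲ` the `j`-th smallest of
  `{0,…,d−1} \ {b₁}`. -/
  | even (b₁ b₂ : ℕ) (rest : List Nd)
      (hv : Vd d ((b₁, b₂) :: rest))
      (heven : Even ((b₁, b₂) :: rest).length)
      (hlt : ((b₁, b₂) :: rest).length < 2 * d)
      (j : ℕ) (hj1 : 1 ≤ j) (hj2 : j ≤ d - 1) :
      Vd d ((nthAvoid 1 b₂ j, nthAvoid 0 b₁ j) :: (b₁, b₂) :: rest)

/-- The edge relation of `G_d`: `u` is a child of `v` or vice versa. -/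
def Ed (d : ℕ) (v u : List Nd) : Prop :=
  Vd d v ∧ Vd d u ∧ ∃ a : Nd, u = a :: v ∨ v = a :: u

/-- The outgoing port number `π_d(v, u)` from `v` towards an adjacent node `u`:
if `u = (b₁, b₂) :: v` is a child of `v` then `b₁`, and if `v = (b₁, b₂) :: u`
is a child of `u` then `b₂`. -/
def outPort (v u : List Nd) : ℕ :=
  if u.length = v.length + 1 then u.headI.1 else v.headI.2

/-- A pair of compatible walks (PCW) of length `k` in `G_d`:
two walks starting at `((1,0))` and `((2,1))` such that the outgoing port
numbers backwards along the walks coincide. -/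
structure IsPCW (d k : ℕ) (w₁ w₂ : ℕ → List Nd) : Prop where
  klen : k ≤ 2 * d - 3
  walk₁ : ∀ j < k, Ed d (w₁ j) (w₁ (j + 1))
  walk₂ : ∀ j < k, Ed d (w₂ j) (w₂ (j + 1))
  start₁ : w₁ 0 = [(1, 0)]
  start₂ : w₂ 0 = [(2, 1)]
  compat : ∀ j, 1 ≤ j → j ≤ k →
    outPort (w₁ j) (w₁ (j - 1)) = outPort (w₂ j) (w₂ (j - 1))

/-- A pair of separating walks (PSW): a PCW such that the last node of the
first walk has a neighbour whose outgoing port number towards it is matched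
by no neighbour of the last node of the second walk. -/
structure IsPSW (d k : ℕ) (w₁ w₂ : ℕ → List Nd)
    extends IsPCW d k w₁ w₂ : Prop where
  sep : ∃ x, Ed d (w₁ k) x ∧
    ∀ y, Ed d (w₂ k) y → outPort x (w₁ k) ≠ outPort y (w₂ k)

/-- A PSW of length `k` in `G_d` is critical if there is no strictly shorter
PSW in `G_d`. -/
def IsCriticalPSW (d k : ℕ) (w₁ w₂ : ℕ → List Nd) : Prop :=
  IsPSW d k w₁ w₂ ∧ ∀ k' w₁' w₂', IsPSW d k' w₁' w₂' → k ≤ k'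

/-- The set of ports `π_d(x, v)` over neighbours `x` of `v`. -/
def portS (d : ℕ) (v : List Nd) : Finset ℕ :=
  match v with
  | [] => Finset.range d
  | (b₁, _) :: rest =>
      insert b₁ ((Finset.Icc 1 (d - 1)).image
        (fun j => nthAvoid (if Even rest.length then 1 else 0) b₁ j))

lemma nthAvoid_ne (lo f j : ℕ) (hj : 1 ≤ j) : nthAvoid lo f j ≠ f := by
  unfold nthAvoid; split <;> omega

lemma nthAvoid_inj (lo f : ℕ) {j j' : ℕ} (h1 : 1 ≤ j) (h1' : 1 ≤ j')
    (h : nthAvoid lo f j = nthAvoid lo f j') : j = j' := by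
  unfold nthAvoid at h; split at h <;> split at h <;> omega

lemma portS_card (d : ℕ) (hd : 2 ≤ d) (v : List Nd) : (portS d v).card = d := by
  match v with
  | [] => simp [portS]
  | (b₁, b₂) :: rest =>
    simp only [portS]
    rw [Finset.card_insert_of_notMem, Finset.card_image_of_injOn]
    · rw [Nat.card_Icc]; omega
    · intro j hj j' hj' h
      simp only [Finset.coe_Icc, Set.mem_Icc] at hj hj'
      exact nthAvoid_inj _ _ hj.1 hj'.1 h
    · intro hc
      simp only [Finset.mem_image, Finset.mem_Icc] at hc
      obtain ⟨j, ⟨hj1, hj2⟩, hj⟩ := hc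
      exact nthAvoid_ne _ _ _ hj1 hj

lemma Vd_tail (d : ℕ) {v : List Nd} (h : Vd d v) : Vd d v.tail := by
  cases h with
  | nil => exact Vd.nil
  | base k h1 h2 => exact Vd.nil
  | odd b₁ b₂ rest hv _ _ _ _ _ => exact hv
  | even b₁ b₂ rest hv _ _ _ _ _ => exact hv

/-- Every port towards `v` of a neighbour of `v` lies in `portS d v`. -/
lemma outPort_mem_portS (d : ℕ) (v x : List Nd) (h : Ed d v x) :
    outPort x v ∈ portS d v := by
  obtain ⟨hv, hx, a, rfl | rfl⟩ := h
  · -- x = a :: v is a child of v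
    cases hx with
    | base k h1 h2 =>
      have : outPort [(k, k - 1)] [] = k - 1 := by
        simp [outPort]
      rw [this]
      simp only [portS, Finset.mem_range]; omega
    | odd b₁ b₂ rest hv' hodd hlt j hj1 hj2 =>
      have hev : Even rest.length := by
        simp only [List.length_cons] at hodd
        rcases Nat.even_or_odd rest.length with he | ho
        · exact he
        · exact absurd hodd (by simp [Nat.odd_add_one, ho])
      have : outPort ((nthAvoid 1 (bplus b₂) j, nthAvoid 1 b₁ j) :: (b₁, b₂) :: rest)
          ((b₁, b₂) :: rest) = nthAvoid 1 b₁ j := by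
        simp [outPort]
      rw [this]
      simp only [portS, hev, if_pos, Finset.mem_insert, Finset.mem_image, Finset.mem_Icc]
      exact Or.inr ⟨j, ⟨hj1, hj2⟩, rfl⟩
    | even b₁ b₂ rest hv' heven hlt j hj1 hj2 =>
      have hodd' : ¬ Even rest.length := by
        simp only [List.length_cons] at heven
        intro he
        exact absurd heven (by simp [Nat.even_add_one, he])
      have : outPort ((nthAvoid 1 b₂ j, nthAvoid 0 b₁ j) :: (b₁, b₂) :: rest)
          ((b₁, b₂) :: rest) = nthAvoid 0 b₁ j := by
        simp [outPort]
      rw [this]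
      simp only [portS, hodd', if_neg, if_false, Finset.mem_insert, Finset.mem_image,
        Finset.mem_Icc]
      exact Or.inr ⟨j, ⟨hj1, hj2⟩, rfl⟩
  · -- v = a :: x, x is the parent of v
    obtain ⟨b₁, b₂⟩ := a
    have : outPort x ((b₁, b₂) :: x) = b₁ := by
      simp [outPort]
    rw [this]
    simp [portS]

/-- Every element of `portS d v` is realised by a neighbour of `v`. -/
lemma exists_nbr_of_mem_portS (d : ℕ) (hd : 2 ≤ d) (v : List Nd) (hv : Vd d v)
    (hlen : v.length < 2 * d) {p : ℕ} (hp : p ∈ portS d v) :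
    ∃ x, Ed d v x ∧ outPort x v = p := by
  match v with
  | [] =>
    simp only [portS, Finset.mem_range] at hp
    refine ⟨[(p + 1, p)], ⟨Vd.nil, ?_, ⟨(p + 1, p), Or.inl rfl⟩⟩, ?_⟩
    · have := Vd.base (d := d) (p + 1) (by omega) (by omega)
      simpa using this
    · simp [outPort]
  | (b₁, b₂) :: rest =>
    simp only [portS, Finset.mem_insert, Finset.mem_image, Finset.mem_Icc] at hp
    rcases hp with rfl | ⟨j, ⟨hj1, hj2⟩, rfl⟩
    · refine ⟨rest, ⟨hv, Vd_tail d hv, ⟨(p, b₂), Or.inr rfl⟩⟩, ?_⟩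
      simp [outPort]
    · rcases Nat.even_or_odd rest.length with he | ho
      · have hodd : Odd ((b₁, b₂) :: rest).length := by
          simp only [List.length_cons, Nat.odd_iff]
          rw [Nat.even_iff] at he; omega
        have hchild := Vd.odd b₁ b₂ rest hv hodd hlen j hj1 hj2
        refine ⟨_, ⟨hv, hchild, ⟨_, Or.inl rfl⟩⟩, ?_⟩
        simp [outPort, he]
      · have heven : Even ((b₁, b₂) :: rest).length := by
          simp only [List.length_cons, Nat.even_iff]
          rw [Nat.odd_iff] at ho; omega
        have hchild := Vd.even b₁ b₂ rest hv heven hlen j hj1 hj2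
        refine ⟨_, ⟨hv, hchild, ⟨_, Or.inl rfl⟩⟩, ?_⟩
        have hne : ¬ Even rest.length := Nat.not_even_iff_odd.mpr ho
        simp [outPort, hne]

lemma Ed_length {d : ℕ} {v u : List Nd} (h : Ed d v u) :
    u.length = v.length + 1 ∨ v.length = u.length + 1 := by
  obtain ⟨_, _, a, rfl | rfl⟩ := h <;> simp

lemma walk_len {d k : ℕ} {w : ℕ → List Nd} (hw : ∀ j < k, Ed d (w j) (w (j + 1)))
    (h0 : (w 0).length = 1) : ∀ j ≤ k, (w j).length ≤ j + 1 := by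
  intro j hj
  induction j with
  | zero => omega
  | succ n ih =>
    have h1 := ih (by omega)
    have h2 := Ed_length (hw n (by omega))
    omega

lemma walk_Vd {d : ℕ} {w : ℕ → List Nd} (k : ℕ)
    (hw : ∀ j < k, Ed d (w j) (w (j + 1))) (h0 : Vd d (w 0)) : Vd d (w k) := by
  cases k with
  | zero => exact h0
  | succ n => exact (hw n (by omega)).2.1

/-- If a PCW is not a PSW, then the end nodes of the two walks have matching
neighbours in both directions. -/
theorem PCW_symmetry (d k : ℕ) (hd : 2 ≤ d) (w₁ w₂ : ℕ → List Nd)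
    (hpcw : IsPCW d k w₁ w₂) (hnpsw : ¬ IsPSW d k w₁ w₂) :
    (∀ x, Ed d (w₁ k) x →
      ∃ y, Ed d (w₂ k) y ∧ outPort x (w₁ k) = outPort y (w₂ k)) ∧
    (∀ y, Ed d (w₂ k) y →
      ∃ x, Ed d (w₁ k) x ∧ outPort x (w₁ k) = outPort y (w₂ k)) := by
  -- first direction from ¬PSW
  have h1 : ∀ x, Ed d (w₁ k) x →
      ∃ y, Ed d (w₂ k) y ∧ outPort x (w₁ k) = outPort y (w₂ k) := by
    intro x hx
    by_contra hc
    push_neg at hc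
    exact hnpsw ⟨hpcw, x, hx, fun y hy => hc y hy⟩
  refine ⟨h1, ?_⟩
  -- basic facts about the endpoints
  have hV1 : Vd d (w₁ k) :=
    walk_Vd k hpcw.walk₁ (by rw [hpcw.start₁]; exact Vd.base 1 le_rfl (by omega))
  have hV2 : Vd d (w₂ k) :=
    walk_Vd k hpcw.walk₂ (by rw [hpcw.start₂]; exact Vd.base 2 (by omega) hd)
  have hl1 : (w₁ k).length < 2 * d := by
    have := walk_len hpcw.walk₁ (by rw [hpcw.start₁]; rfl) k le_rfl
    have := hpcw.klen
    omega
  have hl2 : (w₂ k).length < 2 * d := by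
    have := walk_len hpcw.walk₂ (by rw [hpcw.start₂]; rfl) k le_rfl
    have := hpcw.klen
    omega
  -- port set inclusion, then equality by cardinality
  have hsub : portS d (w₁ k) ⊆ portS d (w₂ k) := by
    intro p hp
    obtain ⟨x, hx, hpx⟩ := exists_nbr_of_mem_portS d hd _ hV1 hl1 hp
    obtain ⟨y, hy, hxy⟩ := h1 x hx
    rw [← hpx, hxy]
    exact outPort_mem_portS d _ y hy
  have heq : portS d (w₁ k) = portS d (w₂ k) :=
    Finset.eq_of_subset_of_card_le hsub
      (by rw [portS_card d hd, portS_card d hd])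
  intro y hy
  have hmem : outPort y (w₂ k) ∈ portS d (w₁ k) := by
    rw [heq]; exact outPort_mem_portS d _ y hy
  obtain ⟨x, hx, hpx⟩ := exists_nbr_of_mem_portS d hd _ hV1 hl1 hmem
  exact ⟨x, hx, hpx⟩

end Paper
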